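/- Let X_1 = X_2 = X_3 = {0, 1} and let m, M be positive reals with 2m + 2M = 1 and M > 2m. For {i,j} ∈ {{1,2},{1,3},{2,3}} define a probability measure μ_ij on X_i × X_j by μ_ij({(x_i, x_j)}) = M if x_i + x_j = 1 and μ_ij({(x_i, x_j)}) = m if x_i = x_j. Then the family {μ_12, μ_13, μ_23} is consistent, the densities of μ_ij with respect to the uniform product measure take only the two values 4m and 4M with ratio M/m > 2, yet there exists no uniting probability measure on X_1 × X_2 × X_3. -/

import Mathlib

open MeasureTheory
open scoped ENNReal

/-- The measure on `{0,1} × {0,1}` with mass `m` on the diagonal points and `M` on the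
off-diagonal points. -/
noncomputable def muPair (m M : ℝ) : Measure (Fin 2 × Fin 2) :=
  ∑ p : Fin 2 × Fin 2,
    (if p.1 = p.2 then ENNReal.ofReal m else ENNReal.ofReal M) • Measure.dirac p

/-- The uniform probability measure on `{0,1} × {0,1}`. -/
noncomputable def unifSq : Measure (Fin 2 × Fin 2) :=
  ∑ p : Fin 2 × Fin 2, ((4 : ℝ≥0∞))⁻¹ • Measure.dirac p

lemma muPair_apply (m M : ℝ) (s : Set (Fin 2 × Fin 2)) :
    muPair m M s = ∑ p : Fin 2 × Fin 2,
      (if p.1 = p.2 then ENNReal.ofReal m else ENNReal.ofReal M) * s.indicator 1 p := by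
  simp only [muPair, Measure.finset_sum_apply]
  refine Finset.sum_congr rfl fun p _ => ?_
  split <;> simp [Measure.dirac_apply, mul_comm]

lemma fin2_01 : ((0 : Fin 2) = 1) = False := by simp
lemma fin2_10 : ((1 : Fin 2) = 0) = False := by simp

lemma muPair_singleton (m M : ℝ) (p : Fin 2 × Fin 2) :
    muPair m M {p} = if p.1 = p.2 then ENNReal.ofReal m else ENNReal.ofReal M := by
  rw [muPair_apply]
  simp [Set.indicator_apply, mul_ite, Finset.sum_ite_eq]

/-- with `2m + 2M = 1`, `M > 2m`, the family `μ_12 = μ_13 = μ_23 = muPair m M`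
consists of probability measures, is consistent, has densities with respect to the uniform
product measure taking only the two values `4m`, `4M` with `M/m > 2`, and nevertheless admits
no uniting probability measure on `{0,1}³`. -/
theorem statement4 (m M : ℝ) (hm : 0 < m) (hM : 0 < M)
    (hsum : 2 * m + 2 * M = 1) (hMm : M > 2 * m) :
    IsProbabilityMeasure (muPair m M) ∧
    (Measure.map Prod.fst (muPair m M) = Measure.map Prod.fst (muPair m M) ∧
     Measure.map Prod.snd (muPair m M) = Measure.map Prod.fst (muPair m M) ∧
     Measure.map Prod.snd (muPair m M) = Measure.map Prod.snd (muPair m M)) ∧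
    (muPair m M = unifSq.withDensity
        (fun p => if p.1 = p.2 then ENNReal.ofReal (4 * m) else ENNReal.ofReal (4 * M)) ∧
      M / m > 2) ∧
    ¬ ∃ μ : Measure (Fin 2 × Fin 2 × Fin 2), IsProbabilityMeasure μ ∧
        Measure.map (fun x : Fin 2 × Fin 2 × Fin 2 => (x.1, x.2.1)) μ = muPair m M ∧
        Measure.map (fun x : Fin 2 × Fin 2 × Fin 2 => (x.1, x.2.2)) μ = muPair m M ∧
        Measure.map (fun x : Fin 2 × Fin 2 × Fin 2 => x.2) μ = muPair m M := by
  have hmM : m + M + (M + m) = 1 := by linarith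
  refine ⟨?_, ⟨rfl, ?_, rfl⟩, ⟨?_, ?_⟩, ?_⟩
  · -- probability measure
    constructor
    rw [muPair_apply]
    simp only [Set.indicator_univ, Pi.one_apply, mul_one, Fintype.sum_prod_type,
      Fin.sum_univ_two, fin2_01, fin2_10, if_true, if_false]
    rw [← ENNReal.ofReal_add hm.le hM.le, ← ENNReal.ofReal_add hM.le hm.le,
      ← ENNReal.ofReal_add (by linarith) (by linarith), hmM, ENNReal.ofReal_one]
  · -- map snd = map fst
    refine Measure.ext_of_singleton fun i => ?_
    rw [Measure.map_apply measurable_snd (measurableSet_singleton i),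
      Measure.map_apply measurable_fst (measurableSet_singleton i)]
    rw [muPair_apply, muPair_apply]
    fin_cases i <;>
      simp [Set.indicator_apply, Fintype.sum_prod_type, Fin.sum_univ_two, fin2_01, fin2_10,
        add_comm]
  · -- density identity
    refine Measure.ext_of_singleton fun p => ?_
    rw [muPair_singleton, withDensity_apply _ (measurableSet_singleton p),
      ← lintegral_indicator (measurableSet_singleton p) _]
    rw [unifSq, lintegral_finset_sum_measure]
    simp only [lintegral_smul_measure, lintegral_dirac]
    rw [Finset.sum_eq_single p
      (by intro q _ hq; simp [Set.indicator_apply, Set.mem_singleton_iff, hq])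
      (by intro h; exact absurd (Finset.mem_univ p) h)]
    have h4 : ∀ x : ℝ, 0 ≤ x → (4 : ℝ≥0∞)⁻¹ * ENNReal.ofReal (4 * x) = ENNReal.ofReal x := by
      intro x hx
      rw [ENNReal.ofReal_mul (by norm_num : (0:ℝ) ≤ 4)]
      rw [show ENNReal.ofReal 4 = (4 : ℝ≥0∞) by norm_num, ← mul_assoc,
        ENNReal.inv_mul_cancel (by norm_num) (by norm_num), one_mul]
    simp only [Set.indicator_of_mem (Set.mem_singleton p)]
    split <;> [exact (h4 m hm.le).symm; exact (h4 M hM.le).symm]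
  · -- M / m > 2
    rw [gt_iff_lt, lt_div_iff₀ hm]
    linarith
  · -- no uniting measure
    rintro ⟨μ, hμP, h12, h13, h23⟩
    set D : Set (Fin 2 × Fin 2) := {p | p.1 = p.2} with hDdef
    have hD : MeasurableSet D := (Set.toFinite D).measurableSet
    have hDval : muPair m M D = ENNReal.ofReal m + ENNReal.ofReal m := by
      rw [muPair_apply]
      simp [hDdef, Set.indicator_apply, Fintype.sum_prod_type, Fin.sum_univ_two,
        fin2_01, fin2_10, two_mul]
    have hg12 : Measurable (fun x : Fin 2 × Fin 2 × Fin 2 => (x.1, x.2.1)) :=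
      measurable_fst.prodMk (measurable_fst.comp measurable_snd)
    have hg13 : Measurable (fun x : Fin 2 × Fin 2 × Fin 2 => (x.1, x.2.2)) :=
      measurable_fst.prodMk (measurable_snd.comp measurable_snd)
    have hg23 : Measurable (fun x : Fin 2 × Fin 2 × Fin 2 => x.2) := measurable_snd
    have hA : μ ((fun x : Fin 2 × Fin 2 × Fin 2 => (x.1, x.2.1)) ⁻¹' D)
        = ENNReal.ofReal m + ENNReal.ofReal m := by
      rw [← Measure.map_apply hg12 hD, h12, hDval]
    have hB : μ ((fun x : Fin 2 × Fin 2 × Fin 2 => (x.1, x.2.2)) ⁻¹' D)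
        = ENNReal.ofReal m + ENNReal.ofReal m := by
      rw [← Measure.map_apply hg13 hD, h13, hDval]
    have hC : μ ((fun x : Fin 2 × Fin 2 × Fin 2 => x.2) ⁻¹' D)
        = ENNReal.ofReal m + ENNReal.ofReal m := by
      rw [← Measure.map_apply hg23 hD, h23, hDval]
    have hcover : (Set.univ : Set (Fin 2 × Fin 2 × Fin 2)) ⊆
        (fun x : Fin 2 × Fin 2 × Fin 2 => (x.1, x.2.1)) ⁻¹' D ∪
        ((fun x : Fin 2 × Fin 2 × Fin 2 => (x.1, x.2.2)) ⁻¹' D ∪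
          (fun x : Fin 2 × Fin 2 × Fin 2 => x.2) ⁻¹' D) := by
      intro x _
      have : x.1 = x.2.1 ∨ x.1 = x.2.2 ∨ x.2.1 = x.2.2 := by
        revert x; decide
      simpa [hDdef, Set.mem_union, Set.mem_preimage, Set.mem_setOf_eq] using this
    have hle : (1 : ℝ≥0∞) ≤ ENNReal.ofReal (m + m + (m + m + (m + m))) := by
      have h1 : (1 : ℝ≥0∞) = μ Set.univ := hμP.measure_univ.symm
      calc (1 : ℝ≥0∞) = μ Set.univ := h1
        _ ≤ μ (_ ∪ (_ ∪ _)) := measure_mono hcover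
        _ ≤ μ _ + μ (_ ∪ _) := measure_union_le _ _
        _ ≤ μ _ + (μ _ + μ _) := add_le_add le_rfl (measure_union_le _ _)
        _ = ENNReal.ofReal (m + m + (m + m + (m + m))) := by
            rw [hA, hB, hC, ← ENNReal.ofReal_add hm.le hm.le,
              ← ENNReal.ofReal_add (by linarith : (0:ℝ) ≤ m + m) (by linarith : (0:ℝ) ≤ m + m),
              ← ENNReal.ofReal_add (by linarith : (0:ℝ) ≤ m + m)
                (by linarith : (0:ℝ) ≤ m + m + (m + m))]
    rw [ENNReal.one_le_ofReal] at hle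
    linarith
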